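/- Let Π be a finitely generated abelian group, let E be an abelian group, and let p : E → Π be a surjective group homomorphism whose kernel has exactly two elements. If the extension does not split, i.e. there is no group homomorphism s : Π → E with p ∘ s = id, then there exists an element a ∈ Π with a ≠ 0 and a + a = 0 such that every e ∈ E with p(e) = a satisfies e + e ≠ 0 (equivalently, every preimage of a in E has order 4). -/

import Mathlib

/-- Extension-theoretic form of Lemma 2: given a surjection `p : E → P` of
abelian groups with two-element kernel, `P` finitely generated, if the
extension does not split then there is an element `a ∈ P` of order two all of
whose preimages in `E` have order four (i.e. satisfy `e + e ≠ 0`). -/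
theorem stmt_0 (P E : Type*) [AddCommGroup P] [AddGroup.FG P] [AddCommGroup E]
    (p : E →+ P) (hp : Function.Surjective p) (hker : Nat.card p.ker = 2)
    (hnonsplit : ¬ ∃ s : P →+ E, p.comp s = AddMonoidHom.id P) :
    ∃ a : P, a ≠ 0 ∧ a + a = 0 ∧ ∀ e : E, p e = a → e + e ≠ 0 := by
  classical
  by_contra hcon
  push_neg at hcon
  -- every kernel element has exponent 2
  have hker2 : ∀ x : E, p x = 0 → x + x = 0 := by
    intro x hx
    have hx' : x ∈ p.ker := hx
    have := @card_nsmul_eq_zero' p.ker _ (⟨x, hx'⟩ : p.ker)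
    rw [hker] at this
    have := congrArg (Subtype.val) this
    simpa [two_nsmul] using this
  -- key lemma
  have star : ∀ (n : ℕ) (g : P), n • g = 0 → ∃ e, p e = g ∧ n • e = 0 := by
    intro n g hg
    obtain ⟨e, he⟩ := hp g
    have hke : p (n • e) = 0 := by rw [map_nsmul, he, hg]
    rcases Nat.even_or_odd n with ⟨m, hm⟩ | ⟨m, hm⟩
    · -- n = m + m (even)
      refine ⟨e, he, ?_⟩
      by_cases ha : m • g = 0
      · have : p (m • e) = 0 := by rw [map_nsmul, he, ha]
        have h2 := hker2 _ this
        rw [hm, add_smul]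
        simpa using h2
      · obtain ⟨f, hf1, hf2⟩ := hcon (m • g) ha (by rw [← add_smul, ← hm, hg])
        have hd : p (m • e - f) = 0 := by rw [map_sub, map_nsmul, he, hf1, sub_self]
        have hd2 := hker2 _ hd
        rw [hm, add_smul]
        have : m • e + m • e = (m • e - f + (m • e - f)) + (f + f) := by abel
        rw [this, hd2, hf2, add_zero]
    · -- n = 2m+1 (odd)
      refine ⟨(n+1) • e, ?_, ?_⟩
      · rw [map_nsmul, he, add_smul, hg, zero_add, one_smul]
      · rw [smul_smul, mul_comm, ← smul_smul]
        have hn1 : n + 1 = (m+1) + (m+1) := by omega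
        rw [hn1, add_smul, ← smul_add, hker2 _ hke, smul_zero]
  -- structure theorem
  apply hnonsplit
  obtain ⟨d, ι, fι, q, hq, ee, ⟨φ⟩⟩ := AddCommGroup.equiv_free_prod_directSum_zmod P
  set Q : ι → ℕ := fun i => q i ^ ee i with hQ
  set gF : Fin d → P := fun j => φ.symm (Finsupp.single j 1, 0) with hgF
  set gT : ι → P := fun i => φ.symm (0, DirectSum.of (fun i => ZMod (Q i)) i 1) with hgT
  choose eF heF using fun j => hp (gF j)
  have hTz : ∀ i, Q i • gT i = 0 := by
    intro i
    rw [hgT, ← map_nsmul]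
    convert map_zero φ.symm
    rw [Prod.smul_mk, ← map_nsmul (DirectSum.of (fun i => ZMod (Q i)) i)]
    simp [nsmul_eq_mul]
  choose eT heT1 heT2 using fun i => star (Q i) (gT i) (hTz i)
  set ψ₁ : (Fin d →₀ ℤ) →+ E := Finsupp.liftAddHom (fun j => zmultiplesHom E (eF j)) with hψ₁
  set ψ₂ : (DirectSum ι fun i => ZMod (Q i)) →+ E :=
    DirectSum.toAddMonoid (fun i => ZMod.lift (Q i)
      ⟨zmultiplesHom E (eT i), by simpa using heT2 i⟩) with hψ₂
  have claim1 : ∀ u : Fin d →₀ ℤ, p (ψ₁ u) = φ.symm (u, 0) := by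
    intro u
    induction u using Finsupp.induction_linear with
    | zero => simp; exact (map_zero φ.symm).symm
    | add f g hf hg =>
      rw [map_add, map_add, hf, hg, ← map_add]
      simp [Prod.mk_add_mk]
    | single j k =>
      rw [hψ₁, Finsupp.liftAddHom_apply_single]
      have h1 : (Finsupp.single j k, (0 : DirectSum ι fun i => ZMod (Q i)))
          = k • ((Finsupp.single j (1:ℤ)), (0 : DirectSum ι fun i => ZMod (Q i))) := by
        rw [Prod.smul_mk, smul_zero, Finsupp.smul_single, smul_eq_mul, mul_one]
      rw [h1, map_zsmul]
      simp only [zmultiplesHom_apply, map_zsmul]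
      rw [heF j, hgF]
  have claim2 : ∀ v : DirectSum ι fun i => ZMod (Q i), p (ψ₂ v) = φ.symm (0, v) := by
    intro v
    induction v using DirectSum.induction_on with
    | zero => simp; exact (map_zero φ.symm).symm
    | add f g hf hg =>
      rw [map_add, map_add, hf, hg, ← map_add]
      simp [Prod.mk_add_mk]
    | of i y =>
      obtain ⟨k, rfl⟩ := ZMod.intCast_surjective y
      have h1 : ((k : ZMod (Q i))) = k • (1 : ZMod (Q i)) := by
        rw [zsmul_eq_mul, mul_one]
      have hof : (DirectSum.of (fun i => ZMod (Q i)) i) (k • (1 : ZMod (Q i)))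
          = k • (DirectSum.of (fun i => ZMod (Q i)) i) 1 := map_zsmul _ _ _
      rw [h1, hof, map_zsmul, map_zsmul]
      have h2 : p (ψ₂ ((DirectSum.of (fun i => ZMod (Q i)) i) 1)) = gT i := by
        rw [hψ₂, DirectSum.toAddMonoid_of]
        have h3 : (1 : ZMod (Q i)) = ((1:ℤ) : ZMod (Q i)) := by simp
        rw [h3, ZMod.lift_coe]
        simpa using heT1 i
      rw [h2, hgT]
      rw [← map_zsmul φ.symm, Prod.smul_mk, smul_zero]
  refine ⟨(ψ₁.coprod ψ₂).comp φ.toAddMonoidHom, ?_⟩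
  ext x
  simp only [AddMonoidHom.comp_apply, AddMonoidHom.id_apply, AddEquiv.toAddMonoidHom_eq_coe,
    AddMonoidHom.coe_coe, AddMonoidHom.coprod_apply]
  rw [map_add, claim1, claim2, ← map_add]
  have : ((φ x).1, (0 : DirectSum ι fun i => ZMod (Q i))) + ((0 : Fin d →₀ ℤ), (φ x).2) = φ x := by
    ext <;> simp
  rw [this, AddEquiv.symm_apply_apply]
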